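/- If (f₀,t₀) ∈ Dom P and φ ∈ C([t₀,T),F), φ' ∈ C([t₀,T'),F) are two solutions of the Volterra problem VP(f₀,t₀), then φ(t) = φ'(t) for all t ∈ [t₀, min(T,T')). -/

import Mathlib

open Set MeasureTheory intervalIntegral Filter Topology

/-- Uniqueness for the abstract semilinear Volterra problem: two solutions of
`VP(f₀,t₀)` on `[t₀,T)` and `[t₀,T')` coincide on `[t₀, min(T,T'))`. -/
theorem stmt_1
    {F Fm : Type*}
    [NormedAddCommGroup F] [NormedSpace ℝ F] [CompleteSpace F]
    [NormedAddCommGroup Fm] [NormedSpace ℝ Fm] [CompleteSpace Fm]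
    -- F is a dense subspace of Fm, with continuous inclusion ι
    (ι : F →L[ℝ] Fm) (hι_inj : Function.Injective ι) (hι_dense : DenseRange ι)
    -- the semigroup (e^{tA})_{t ≥ 0} on Fm, strongly continuous
    (U : ℝ → Fm →L[ℝ] Fm)
    (hU0 : U 0 = ContinuousLinearMap.id ℝ Fm)
    (hUsem : ∀ s ≥ (0:ℝ), ∀ t ≥ (0:ℝ), U (s + t) = (U s).comp (U t))
    (hUsc : ∀ f : Fm, ContinuousOn (fun t => U t f) (Ici (0:ℝ)))
    -- e^{tA} maps F into F (lift V), giving a strongly continuous semigroup on F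
    (V : ℝ → F → F)
    (hV : ∀ t ≥ (0:ℝ), ∀ x : F, ι (V t x) = U t (ι x))
    (hVcont : ContinuousOn (fun p : F × ℝ => V p.2 p.1) (univ ×ˢ Ici (0:ℝ)))
    -- e^{tA} maps Fm into F for t > 0 (lift W), continuously on Fm × (0,∞)
    (W : ℝ → Fm → F)
    (hW : ∀ t > (0:ℝ), ∀ f : Fm, ι (W t f) = U t f)
    (hWcont : ContinuousOn (fun p : Fm × ℝ => W p.2 p.1) (univ ×ˢ Ioi (0:ℝ)))
    -- the estimator u₋ for the semigroup, with u₋(t) = O(1/t^{1-σ}) at 0⁺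
    (um : ℝ → ℝ)
    (hum_cont : ContinuousOn um (Ioi (0:ℝ)))
    (hum_pos : ∀ t > (0:ℝ), 0 < um t)
    (hum_bd : ∀ t > (0:ℝ), ∀ f : Fm, ‖W t f‖ ≤ um t * ‖f‖)
    (σ : ℝ) (hσ : σ ∈ Ioc (0:ℝ) 1)
    (hum_O : ∃ C : ℝ, ∃ δ > (0:ℝ), ∀ t ∈ Ioo (0:ℝ) δ, um t ≤ C / t ^ (1 - σ))
    -- the nonlinearity P, with semi-open domain, Lipschitz on closed bounded subsets
    (Dom : Set (F × ℝ)) (P : F → ℝ → Fm)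
    (hDom : ∀ p ∈ Dom, ∃ δ > (0:ℝ), ∃ r > (0:ℝ),
      ∀ f : F, ‖f - p.1‖ < r → ∀ t ∈ Ico p.2 (p.2 + δ), (f, t) ∈ Dom)
    (hPlip : ∀ C : Set (F × ℝ), IsClosed C → Bornology.IsBounded C → C ⊆ Dom →
      ∃ L M : ℝ, ∀ p ∈ C, ∀ q ∈ C,
        ‖P p.1 p.2 - P q.1 q.2‖ ≤ L * ‖p.1 - q.1‖ + M * |p.2 - q.2|)
    -- datum
    (t₀ : ℝ) (f₀ : F) (hf₀ : (f₀, t₀) ∈ Dom)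
    (T T' : EReal) (hT : (t₀ : EReal) < T) (hT' : (t₀ : EReal) < T')
    -- φ is a solution of VP(f₀,t₀) on [t₀,T)
    (φ : ℝ → F)
    (hφ_cont : ContinuousOn φ {t : ℝ | t₀ ≤ t ∧ (t : EReal) < T})
    (hφ_dom : ∀ t : ℝ, t₀ ≤ t → (t : EReal) < T → (φ t, t) ∈ Dom)
    (hφ_eq : ∀ t : ℝ, t₀ ≤ t → (t : EReal) < T →
      φ t = V (t - t₀) f₀ + ∫ s in t₀..t, W (t - s) (P (φ s) s))
    -- ψ is a solution of VP(f₀,t₀) on [t₀,T')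
    (ψ : ℝ → F)
    (hψ_cont : ContinuousOn ψ {t : ℝ | t₀ ≤ t ∧ (t : EReal) < T'})
    (hψ_dom : ∀ t : ℝ, t₀ ≤ t → (t : EReal) < T' → (ψ t, t) ∈ Dom)
    (hψ_eq : ∀ t : ℝ, t₀ ≤ t → (t : EReal) < T' →
      ψ t = V (t - t₀) f₀ + ∫ s in t₀..t, W (t - s) (P (ψ s) s)) :
    ∀ t : ℝ, t₀ ≤ t → (t : EReal) < min T T' → φ t = ψ t := by
  classical
  obtain ⟨C, δ, hδ, hC⟩ := hum_O
  have hσ0 : 0 < σ := hσ.1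
  have hσ1 : σ ≤ 1 := hσ.2
  have hCpos : 0 < C := by
    have h1 := hum_pos (δ/2) (by linarith)
    have h2 := hC (δ/2) ⟨by linarith, by linarith⟩
    have h3 : (0:ℝ) < (δ/2) ^ (1-σ) := Real.rpow_pos_of_pos (by linarith) _
    have h4 : 0 < C / (δ/2) ^ (1-σ) := lt_of_lt_of_le h1 h2
    rcases div_pos_iff.mp h4 with ⟨h, _⟩ | ⟨_, h⟩
    · exact h
    · linarith
  have hWsub : ∀ t > (0:ℝ), ∀ f g : Fm, W t (f - g) = W t f - W t g := by
    intro t ht f g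
    apply hι_inj
    rw [map_sub, hW t ht, hW t ht, hW t ht, map_sub]
  have hbase : φ t₀ = ψ t₀ := by
    rw [hφ_eq t₀ le_rfl hT, hψ_eq t₀ le_rfl hT', integral_same, integral_same]
  -- integrability of um on (0, a]
  have humInt : ∀ a : ℝ, 0 < a → IntervalIntegrable um volume 0 a := by
    intro a ha
    set b := min a (δ/2) with hb
    have hb0 : 0 < b := lt_min ha (by linarith)
    have hbδ : b < δ := lt_of_le_of_lt (min_le_right _ _) (by linarith)
    have hba : b ≤ a := min_le_left _ _
    have h1 : IntervalIntegrable um volume 0 b := by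
      have hmeas : AEStronglyMeasurable um (volume.restrict (Set.uIoc (0:ℝ) b)) := by
        rw [uIoc_of_le hb0.le]
        exact (hum_cont.mono (fun x hx => hx.1 : Ioc (0:ℝ) b ⊆ Ioi 0)).aestronglyMeasurable
          measurableSet_Ioc
      refine IntervalIntegrable.mono_fun (f := fun x => C * x ^ (σ - 1))
        ((intervalIntegrable_rpow' (by linarith)).const_mul C) hmeas ?_
      rw [uIoc_of_le hb0.le]
      refine ae_restrict_of_forall_mem measurableSet_Ioc ?_
      intro x hx
      have hx0 : 0 < x := hx.1
      have hxδ : x < δ := lt_of_le_of_lt hx.2 hbδ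
      have h2 := hC x ⟨hx0, hxδ⟩
      have h3 : C / x ^ (1 - σ) = C * x ^ (σ - 1) := by
        rw [div_eq_mul_inv, ← Real.rpow_neg hx0.le, neg_sub]
      calc ‖um x‖ = um x := by rw [Real.norm_eq_abs, abs_of_pos (hum_pos x hx0)]
        _ ≤ C * x ^ (σ - 1) := by rw [← h3]; exact h2
        _ ≤ ‖C * x ^ (σ - 1)‖ := le_abs_self _
    have h2 : IntervalIntegrable um volume b a := by
      apply ContinuousOn.intervalIntegrable_of_Icc hba
      exact hum_cont.mono (fun x hx => lt_of_lt_of_le hb0 hx.1)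
    exact h1.trans h2
  -- bound on ∫₀ʰ um for 0 < h < δ
  have humBd : ∀ h : ℝ, 0 < h → h < δ → |∫ r in (0:ℝ)..h, um r| ≤ C * h ^ σ / σ := by
    intro h h0 hhδ
    have heval : ∫ r in (0:ℝ)..h, C * r ^ (σ - 1) = C * h ^ σ / σ := by
      rw [intervalIntegral.integral_const_mul, integral_rpow (Or.inl (by linarith : (-1:ℝ) < σ - 1))]
      have hσσ : σ - 1 + 1 = σ := by ring
      rw [hσσ, Real.zero_rpow hσ0.ne', sub_zero]
      ring
    have hae : ∀ᵐ r ∂volume.restrict (Set.uIoc (0:ℝ) h), ‖um r‖ ≤ C * r ^ (σ - 1) := by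
      rw [uIoc_of_le h0.le]
      refine ae_restrict_of_forall_mem measurableSet_Ioc ?_
      intro r hr
      have hr0 : 0 < r := hr.1
      have h3 : C / r ^ (1 - σ) = C * r ^ (σ - 1) := by
        rw [div_eq_mul_inv, ← Real.rpow_neg hr0.le, neg_sub]
      calc ‖um r‖ = um r := by rw [Real.norm_eq_abs, abs_of_pos (hum_pos r hr0)]
        _ ≤ C * r ^ (σ - 1) := by rw [← h3]; exact hC r ⟨hr0, lt_of_le_of_lt hr.2 hhδ⟩
    have hpos : 0 ≤ C * h ^ σ / σ := by positivity
    calc |∫ r in (0:ℝ)..h, um r| = ‖∫ r in (0:ℝ)..h, um r‖ := (Real.norm_eq_abs _).symm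
      _ ≤ |∫ r in (0:ℝ)..h, C * r ^ (σ - 1)| :=
          intervalIntegral.norm_integral_le_abs_of_norm_le hae ((intervalIntegrable_rpow' (by linarith)).const_mul C)
      _ = C * h ^ σ / σ := by rw [heval, abs_of_nonneg hpos]
  -- the key step: equality on [t₀, t₁) for each t₁ < min T T'
  have key : ∀ t₁ : ℝ, t₀ < t₁ → (t₁ : EReal) < min T T' →
      ∀ u : ℝ, t₀ ≤ u → u < t₁ → φ u = ψ u := by
    intro t₁ ht01 ht₁
    have hTT := lt_min_iff.mp ht₁
    have hsT : ∀ u : ℝ, u ≤ t₁ → (u : EReal) < T := fun u hu =>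
      lt_of_le_of_lt (by exact_mod_cast hu) hTT.1
    have hsT' : ∀ u : ℝ, u ≤ t₁ → (u : EReal) < T' := fun u hu =>
      lt_of_le_of_lt (by exact_mod_cast hu) hTT.2
    have hφc : ContinuousOn φ (Icc t₀ t₁) := hφ_cont.mono fun u hu => ⟨hu.1, hsT u hu.2⟩
    have hψc : ContinuousOn ψ (Icc t₀ t₁) := hψ_cont.mono fun u hu => ⟨hu.1, hsT' u hu.2⟩
    set Cset : Set (F × ℝ) :=
      (fun s => (φ s, s)) '' Icc t₀ t₁ ∪ (fun s => (ψ s, s)) '' Icc t₀ t₁ with hCsetdef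
    have hCcomp : IsCompact Cset :=
      (isCompact_Icc.image_of_continuousOn (hφc.prodMk continuousOn_id)).union
        (isCompact_Icc.image_of_continuousOn (hψc.prodMk continuousOn_id))
    have hCD : Cset ⊆ Dom := by
      rintro p (⟨s, hs, rfl⟩ | ⟨s, hs, rfl⟩)
      · exact hφ_dom s hs.1 (hsT s hs.2)
      · exact hψ_dom s hs.1 (hsT' s hs.2)
    obtain ⟨L, M, hLM⟩ := hPlip Cset hCcomp.isClosed hCcomp.isBounded hCD
    set L₀ := max L 0 with hL₀def
    set M₀ := max M 0 with hM₀def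
    have hL₀ : 0 ≤ L₀ := le_max_right _ _
    have hlip : ∀ p ∈ Cset, ∀ q ∈ Cset,
        ‖P p.1 p.2 - P q.1 q.2‖ ≤ L₀ * ‖p.1 - q.1‖ + M₀ * |p.2 - q.2| := by
      intro p hp q hq
      refine (hLM p hp q hq).trans (add_le_add ?_ ?_)
      · exact mul_le_mul_of_nonneg_right (le_max_left _ _) (norm_nonneg _)
      · exact mul_le_mul_of_nonneg_right (le_max_left _ _) (abs_nonneg _)
    have hφmem : ∀ s ∈ Icc t₀ t₁, (φ s, s) ∈ Cset := fun s hs => Or.inl ⟨s, hs, rfl⟩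
    have hψmem : ∀ s ∈ Icc t₀ t₁, (ψ s, s) ∈ Cset := fun s hs => Or.inr ⟨s, hs, rfl⟩
    have hPc : ∀ χ : ℝ → F, ContinuousOn χ (Icc t₀ t₁) →
        (∀ s ∈ Icc t₀ t₁, (χ s, s) ∈ Cset) →
        ContinuousOn (fun s => P (χ s) s) (Icc t₀ t₁) := by
      intro χ hχ hmem s₀ hs₀
      have h1 : Tendsto (fun s => P (χ s) s - P (χ s₀) s₀) (𝓝[Icc t₀ t₁] s₀) (𝓝 0) := by
        apply squeeze_zero_norm' (a := fun s => L₀ * ‖χ s - χ s₀‖ + M₀ * |s - s₀|)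
        · filter_upwards [self_mem_nhdsWithin] with s hs
          exact hlip _ (hmem s hs) _ (hmem s₀ hs₀)
        · have h2 : ContinuousWithinAt (fun s => L₀ * ‖χ s - χ s₀‖ + M₀ * |s - s₀|)
              (Icc t₀ t₁) s₀ :=
            ((((hχ s₀ hs₀).sub continuousWithinAt_const).norm).const_mul L₀).add
              (((continuous_id.sub continuous_const).abs.continuousWithinAt).const_mul M₀)
          have h4 : Tendsto (fun s => L₀ * ‖χ s - χ s₀‖ + M₀ * |s - s₀|)
              (𝓝[Icc t₀ t₁] s₀) (𝓝 (L₀ * ‖χ s₀ - χ s₀‖ + M₀ * |s₀ - s₀|)) := h2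
          simpa using h4
      exact tendsto_sub_nhds_zero_iff.mp h1
    have hPφc := hPc φ hφc hφmem
    have hPψc := hPc ψ hψc hψmem
    -- integrability of the Volterra integrand
    have hGint : ∀ g : ℝ → Fm, ContinuousOn g (Icc t₀ t₁) → ∀ t, t₀ < t → t ≤ t₁ →
        IntervalIntegrable (fun s => W (t - s) (g s)) volume t₀ t := by
      intro g hg t ht0 ht1
      obtain ⟨Bg, hBg⟩ := isCompact_Icc.exists_bound_of_continuousOn hg
      have hcont : ContinuousOn (fun s => W (t - s) (g s)) (Ico t₀ t) := by
        apply hWcont.comp ((hg.mono (Ico_subset_Icc_self.trans (Icc_subset_Icc le_rfl ht1))).prodMk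
          ((continuous_const.sub continuous_id).continuousOn))
        intro s hs
        exact ⟨mem_univ _, sub_pos.mpr hs.2⟩
      have hmeas : AEStronglyMeasurable (fun s => W (t - s) (g s))
          (volume.restrict (Set.uIoc t₀ t)) := by
        rw [uIoc_of_le ht0.le, ← Measure.restrict_congr_set Ioo_ae_eq_Ioc]
        exact (hcont.mono Ioo_subset_Ico_self).aestronglyMeasurable measurableSet_Ioo
      have hint2 : IntervalIntegrable (fun s => Bg * um (t - s)) volume t₀ t := by
        have h5 := ((humInt (t - t₀) (by linarith)).comp_sub_left t).symm.const_mul Bg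
        simpa [sub_sub_cancel] using h5
      refine hint2.mono_fun hmeas ?_
      rw [uIoc_of_le ht0.le, ← Measure.restrict_congr_set Ioo_ae_eq_Ioc]
      refine ae_restrict_of_forall_mem measurableSet_Ioo ?_
      intro s hs
      have hts : 0 < t - s := by linarith [hs.2]
      calc ‖W (t - s) (g s)‖ ≤ um (t - s) * ‖g s‖ := hum_bd _ hts _
        _ ≤ um (t - s) * Bg :=
            mul_le_mul_of_nonneg_left (hBg s ⟨hs.1.le, hs.2.le.trans ht1⟩) (hum_pos _ hts).le
        _ = Bg * um (t - s) := mul_comm _ _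
        _ ≤ ‖Bg * um (t - s)‖ := le_abs_self _
    -- choice of ε
    obtain ⟨ε, hεhalf, hε0, hεδ⟩ :
        ∃ ε : ℝ, L₀ * (C * ε ^ σ / σ) < 1/2 ∧ 0 < ε ∧ ε < δ := by
      have h1 : Tendsto (fun e : ℝ => e ^ σ) (𝓝[>] (0:ℝ)) (𝓝 0) := by
        have h2 : Tendsto (fun x : ℝ => x ^ σ) (𝓝[Ioi 0] 0) (𝓝 ((0:ℝ) ^ σ)) :=
          (Real.continuousAt_rpow_const 0 σ (Or.inr hσ0.le)).continuousWithinAt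
        simpa [Real.zero_rpow hσ0.ne'] using h2
      have h0 : Tendsto (fun e : ℝ => L₀ * (C * e ^ σ / σ)) (𝓝[>] (0:ℝ)) (𝓝 0) := by
        have h2 := h1.const_mul (L₀ * C / σ)
        rw [mul_zero] at h2
        exact h2.congr (fun e => by ring)
      have h3 := (h0.eventually_lt_const (by norm_num : (0:ℝ) < 1/2)).and
        (eventually_of_mem (Ioo_mem_nhdsGT_of_mem (⟨le_rfl, hδ⟩ : (0:ℝ) ∈ Ico 0 δ))
          (fun x hx => hx))
      obtain ⟨ε, hε1, hε2⟩ := h3.exists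
      exact ⟨ε, hε1, hε2.1, hε2.2⟩
    -- the inductive set
    set s : Set ℝ := {t : ℝ | ∀ u : ℝ, t₀ ≤ u → u < t → φ u = ψ u} with hsdef
    have hsclosed : IsClosed s := by
      have hrw : s = ⋂ (u : ℝ) (_ : t₀ ≤ u ∧ φ u ≠ ψ u), Iic u := by
        ext t
        simp only [hsdef, mem_setOf_eq, mem_iInter, mem_Iic]
        constructor
        · intro h u hu
          by_contra hlt
          push_neg at hlt
          exact hu.2 (h u hu.1 hlt)
        · intro h u hu hut
          by_contra hne
          exact absurd (h u ⟨hu, hne⟩) (not_le.mpr hut)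
      rw [hrw]
      exact isClosed_iInter fun u => isClosed_iInter fun _ => isClosed_Iic
    have main : Icc t₀ t₁ ⊆ s := by
      apply IsClosed.Icc_subset_of_forall_exists_gt (hsclosed.inter isClosed_Icc)
      · intro u hu hut
        exact absurd hut (not_lt.mpr hu)
      · rintro x ⟨hxs, hx0, hx1⟩ y hy
        -- equality at x itself, by continuity from the left
        have hφx : φ x = ψ x := by
          rcases eq_or_lt_of_le hx0 with heq | h0
          · rw [← heq]; exact hbase
          · have hcl : x ∈ closure (Ico t₀ x) := by
              rw [closure_Ico h0.ne]
              exact ⟨h0.le, le_rfl⟩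
            haveI := mem_closure_iff_nhdsWithin_neBot.mp hcl
            have hsub2 : Ico t₀ x ⊆ Icc t₀ t₁ := fun v hv => ⟨hv.1, hv.2.le.trans hx1.le⟩
            have hxmem : x ∈ Icc t₀ t₁ := ⟨hx0, hx1.le⟩
            have l1 : Tendsto φ (𝓝[Ico t₀ x] x) (𝓝 (φ x)) := (hφc x hxmem).mono hsub2
            have l2 : Tendsto ψ (𝓝[Ico t₀ x] x) (𝓝 (ψ x)) := (hψc x hxmem).mono hsub2
            have l3 : Tendsto φ (𝓝[Ico t₀ x] x) (𝓝 (ψ x)) := by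
              refine l2.congr' ?_
              filter_upwards [self_mem_nhdsWithin] with v hv
              exact (hxs v hv.1 hv.2).symm
            exact tendsto_nhds_unique l1 l3
        have hEqx : ∀ u ∈ Icc t₀ x, φ u = ψ u := by
          intro u hu
          rcases lt_or_eq_of_le hu.2 with h | h
          · exact hxs u hu.1 h
          · rw [h]; exact hφx
        -- contraction interval
        set y' := min (min y (x + ε)) t₁ with hy'def
        have hxy' : x < y' := lt_min (lt_min hy (by linarith)) hx1
        have hy'1 : y' ≤ t₁ := min_le_right _ _
        have hy'ε : y' ≤ x + ε := le_trans (min_le_left _ _) (min_le_right _ _)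
        have hJsub : Icc x y' ⊆ Icc t₀ t₁ := Icc_subset_Icc hx0 hy'1
        obtain ⟨tm, htmJ, htmmax⟩ := isCompact_Icc.exists_isMaxOn
          (nonempty_Icc.mpr hxy'.le) (((hφc.mono hJsub).sub (hψc.mono hJsub)).norm)
        set m := ‖φ tm - ψ tm‖ with hmdef
        have hm0 : 0 ≤ m := norm_nonneg _
        have hmzero : m = 0 := by
          rcases eq_or_lt_of_le htmJ.1 with heq | hxtm
          · rw [hmdef, ← heq, hφx, sub_self, norm_zero]
          · set t := tm with htdef
            have ht1 : t ≤ t₁ := le_trans htmJ.2 hy'1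
            have ht0 : t₀ < t := lt_of_le_of_lt hx0 hxtm
            have hIφ : IntervalIntegrable (fun s => W (t - s) (P (φ s) s)) volume t₀ t :=
              hGint _ hPφc t ht0 ht1
            have hIψ : IntervalIntegrable (fun s => W (t - s) (P (ψ s) s)) volume t₀ t :=
              hGint _ hPψc t ht0 ht1
            have hID := hIφ.sub hIψ
            have e1 : φ t - ψ t =
                ∫ s in t₀..t, (W (t - s) (P (φ s) s) - W (t - s) (P (ψ s) s)) := by
              rw [hφ_eq t ht0.le (hsT t ht1), hψ_eq t ht0.le (hsT' t ht1),
                integral_sub hIφ hIψ]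
              abel
            have hss1 : uIcc t₀ x ⊆ uIcc t₀ t := by
              rw [uIcc_of_le hx0, uIcc_of_le ht0.le]
              exact Icc_subset_Icc le_rfl hxtm.le
            have hss2 : uIcc x t ⊆ uIcc t₀ t := by
              rw [uIcc_of_le hxtm.le, uIcc_of_le ht0.le]
              exact Icc_subset_Icc hx0 le_rfl
            have e2 : ∫ s in t₀..x, (W (t - s) (P (φ s) s) - W (t - s) (P (ψ s) s)) = 0 := by
              have hz : EqOn (fun s => W (t - s) (P (φ s) s) - W (t - s) (P (ψ s) s))
                  (fun _ => (0:F)) (uIcc t₀ x) := by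
                intro v hv
                rw [uIcc_of_le hx0] at hv
                simp [hEqx v hv]
              rw [integral_congr hz, intervalIntegral.integral_zero]
            have e3 : φ t - ψ t =
                ∫ s in x..t, (W (t - s) (P (φ s) s) - W (t - s) (P (ψ s) s)) := by
              rw [e1, ← integral_add_adjacent_intervals (hID.mono_set hss1)
                (hID.mono_set hss2), e2, zero_add]
            have htx : 0 < t - x := by linarith
            have htxε : t - x ≤ ε := by
              have := le_trans htmJ.2 hy'ε
              linarith
            have htxδ : t - x < δ := lt_of_le_of_lt htxε hεδ
            have hKest : ‖φ t - ψ t‖ ≤ |∫ s in x..t, L₀ * m * um (t - s)| := by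
              rw [e3]
              apply intervalIntegral.norm_integral_le_abs_of_norm_le
              · rw [uIoc_of_le hxtm.le, ← Measure.restrict_congr_set Ioo_ae_eq_Ioc]
                refine ae_restrict_of_forall_mem measurableSet_Ioo ?_
                intro v hv
                have hvt : 0 < t - v := by linarith [hv.2]
                have hvI : v ∈ Icc t₀ t₁ := ⟨le_trans hx0 hv.1.le, le_trans hv.2.le ht1⟩
                have hvJ : v ∈ Icc x y' := ⟨hv.1.le, le_trans hv.2.le htmJ.2⟩
                rw [← hWsub _ hvt]
                calc ‖W (t - v) (P (φ v) v - P (ψ v) v)‖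
                    ≤ um (t - v) * ‖P (φ v) v - P (ψ v) v‖ := hum_bd _ hvt _
                  _ ≤ um (t - v) * (L₀ * ‖φ v - ψ v‖ + M₀ * |v - v|) :=
                      mul_le_mul_of_nonneg_left
                        (hlip _ (hφmem v hvI) _ (hψmem v hvI)) (hum_pos _ hvt).le
                  _ = um (t - v) * (L₀ * ‖φ v - ψ v‖) := by simp
                  _ ≤ um (t - v) * (L₀ * m) := by
                      refine mul_le_mul_of_nonneg_left ?_ (hum_pos _ hvt).le
                      exact mul_le_mul_of_nonneg_left (htmmax hvJ) hL₀
                  _ = L₀ * m * um (t - v) := by ring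
              · have h5 := ((humInt (t - x) htx).comp_sub_left t).symm.const_mul (L₀ * m)
                simpa [sub_sub_cancel] using h5
            have hcs : ∫ v in x..t, um (t - v) = ∫ r in (0:ℝ)..(t - x), um r := by
              have h6 := integral_comp_sub_left (a := x) (b := t) um t
              rw [show t - t = (0:ℝ) from sub_self t] at h6
              exact h6
            have hRHS : |∫ v in x..t, L₀ * m * um (t - v)| ≤ L₀ * m * (C * (t - x) ^ σ / σ) := by
              rw [intervalIntegral.integral_const_mul, abs_mul, hcs, abs_of_nonneg (mul_nonneg hL₀ hm0)]
              exact mul_le_mul_of_nonneg_left (humBd _ htx htxδ) (mul_nonneg hL₀ hm0)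
            have hmm : m ≤ L₀ * m * (C * (t - x) ^ σ / σ) := le_trans hKest hRHS
            have hmono : C * (t - x) ^ σ / σ ≤ C * ε ^ σ / σ := by
              exact (div_le_div_iff_of_pos_right hσ0).mpr
                (mul_le_mul_of_nonneg_left (Real.rpow_le_rpow htx.le htxε hσ0.le) hCpos.le)
            by_contra hne
            have hmpos : 0 < m := lt_of_le_of_ne hm0 (Ne.symm hne)
            have f1 := mul_le_mul_of_nonneg_left hmono (mul_nonneg hL₀ hm0)
            have f2 := mul_lt_mul_of_pos_left hεhalf hmpos
            nlinarith [hmm, f1, f2]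
        refine ⟨y', ?_, hxy', le_trans (min_le_left _ _) (min_le_left _ _)⟩
        intro u hu hut
        rcases le_or_gt u x with h | h
        · exact hEqx u ⟨hu, h⟩
        · have h7 : ‖φ u - ψ u‖ ≤ m := htmmax ⟨h.le, hut.le⟩
          rw [hmzero] at h7
          have h8 : φ u - ψ u = 0 := norm_le_zero_iff.mp h7
          exact sub_eq_zero.mp h8
    exact fun u hu hut => main ⟨ht01.le, le_rfl⟩ u hu hut
  intro t htt htmin
  obtain ⟨x, hx1, hx2⟩ := EReal.exists_between_coe_real htmin
  have hx1' : t < x := by exact_mod_cast hx1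
  exact key x (lt_of_le_of_lt htt hx1') hx2 t htt hx1'
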